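/- Let h₀, …, h_r be forms of degree d in ℝ[x₁,x₂,x₃] and let L be a linear functional on forms of degree 2d given by L(g) = ⟨q − p, g⟩ where p = ∑ h_i². Suppose p locally minimizes g ↦ ‖q − g‖² over the image of the sum-of-squares map Φ(a₀,…,a_r) = ∑ a_i². Then: (first-order condition) L(∑ h_i a_i) = 0 for all forms a₀,…,a_r of degree d; and (second-order condition) L(∑ a_i²) ≤ 0 whenever ∑ a_i h_i = 0. -/

import Mathlib

open MvPolynomial

/-- The coefficientwise inner product on real polynomials in three variables
(the monomial basis is orthonormal). -/
noncomputable def pInner (f g : MvPolynomial (Fin 3) ℝ) : ℝ :=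
  ∑ m ∈ f.support, f.coeff m * g.coeff m

lemma pInner_eq_sum {f g : MvPolynomial (Fin 3) ℝ} {s : Finset ((Fin 3) →₀ ℕ)}
    (hs : f.support ⊆ s) :
    pInner f g = ∑ m ∈ s, f.coeff m * g.coeff m :=
  Finset.sum_subset hs (fun m _ hm => by
    simp [MvPolynomial.notMem_support_iff.mp hm])

lemma pInner_comm (f g : MvPolynomial (Fin 3) ℝ) : pInner f g = pInner g f := by
  rw [pInner_eq_sum (s := f.support ∪ g.support) Finset.subset_union_left,
      pInner_eq_sum (s := f.support ∪ g.support) Finset.subset_union_right]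
  exact Finset.sum_congr rfl fun m _ => mul_comm _ _

lemma pInner_sub_left (f g w : MvPolynomial (Fin 3) ℝ) :
    pInner (f - g) w = pInner f w - pInner g w := by
  have h1 : (f - g).support ⊆ f.support ∪ g.support ∪ (f - g).support :=
    Finset.subset_union_right
  have h2 : f.support ⊆ f.support ∪ g.support ∪ (f - g).support :=
    (Finset.subset_union_left).trans Finset.subset_union_left
  have h3 : g.support ⊆ f.support ∪ g.support ∪ (f - g).support :=
    (Finset.subset_union_right).trans Finset.subset_union_left
  rw [pInner_eq_sum h1, pInner_eq_sum h2, pInner_eq_sum h3, ← Finset.sum_sub_distrib]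
  exact Finset.sum_congr rfl fun m _ => by rw [MvPolynomial.coeff_sub, sub_mul]

lemma pInner_sub_right (w f g : MvPolynomial (Fin 3) ℝ) :
    pInner w (f - g) = pInner w f - pInner w g := by
  rw [pInner_comm, pInner_sub_left, pInner_comm f w, pInner_comm g w]

lemma pInner_Cmul_left (c : ℝ) (f w : MvPolynomial (Fin 3) ℝ) :
    pInner (C c * f) w = c * pInner f w := by
  have hs : (C c * f).support ⊆ f.support := by
    rw [← smul_eq_C_mul]; exact MvPolynomial.support_smul
  rw [pInner_eq_sum hs, pInner, Finset.mul_sum]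
  exact Finset.sum_congr rfl fun m _ => by rw [MvPolynomial.coeff_C_mul, mul_assoc]

lemma pInner_Cmul_right (c : ℝ) (w f : MvPolynomial (Fin 3) ℝ) :
    pInner w (C c * f) = c * pInner w f := by
  rw [pInner_comm, pInner_Cmul_left, pInner_comm f w]

lemma pInner_self_nonneg (f : MvPolynomial (Fin 3) ℝ) : 0 ≤ pInner f f :=
  Finset.sum_nonneg fun m _ => mul_self_nonneg _

lemma pInner_expand (u S T : MvPolynomial (Fin 3) ℝ) (α β : ℝ) :
    pInner (u - C α * S - C β * T) (u - C α * S - C β * T) =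
      pInner u u - 2*α*(pInner u S) - 2*β*(pInner u T)
        + α^2 * pInner S S + 2*(α*β)*(pInner S T) + β^2 * pInner T T := by
  simp only [pInner_sub_left, pInner_sub_right, pInner_Cmul_left, pInner_Cmul_right]
  rw [pInner_comm S u, pInner_comm T u, pInner_comm T S]
  ring

lemma aux_le_zero {ε M c : ℝ} (hε : 0 < ε) (hM : 0 ≤ M)
    (H : ∀ t : ℝ, 0 < t → t < ε → c * t ≤ M * t^2) : c ≤ 0 := by
  by_contra hc
  push_neg at hc
  set t := min (ε/2) (c/(2*(M+1))) with ht
  have ht0 : 0 < t := lt_min (by linarith) (by positivity)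
  have h1 := H t ht0 (lt_of_le_of_lt (min_le_left _ _) (by linarith))
  have h2 : t ≤ c/(2*(M+1)) := min_le_right _ _
  have key : M * (c/(2*(M+1))) ≤ c/2 := by
    rw [mul_div_assoc']; rw [div_le_div_iff₀ (by positivity) (by norm_num)]
    nlinarith
  have h3 : M * t ≤ c/2 := le_trans (by nlinarith) key
  nlinarith [mul_le_mul_of_nonneg_right h3 ht0.le]

set_option maxHeartbeats 1000000 in
theorem stmt_17 (d r : ℕ) (h : Fin (r + 1) → MvPolynomial (Fin 3) ℝ)
    (hhom : ∀ i, (h i).IsHomogeneous d)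
    (q : MvPolynomial (Fin 3) ℝ) (hq : q.IsHomogeneous (2 * d))
    (p : MvPolynomial (Fin 3) ℝ) (hp : p = ∑ i, (h i) ^ 2)
    (hmin : ∃ δ > (0:ℝ), ∀ a : Fin (r + 1) → MvPolynomial (Fin 3) ℝ,
      (∀ i, (a i).IsHomogeneous d) →
      (∀ i, pInner (a i - h i) (a i - h i) < δ) →
      pInner (q - p) (q - p) ≤
        pInner (q - ∑ i, (a i) ^ 2) (q - ∑ i, (a i) ^ 2)) :
    (∀ a : Fin (r + 1) → MvPolynomial (Fin 3) ℝ, (∀ i, (a i).IsHomogeneous d) →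
      pInner (q - p) (∑ i, h i * a i) = 0) ∧
    (∀ a : Fin (r + 1) → MvPolynomial (Fin 3) ℝ, (∀ i, (a i).IsHomogeneous d) →
      ∑ i, a i * h i = 0 →
      pInner (q - p) (∑ i, (a i) ^ 2) ≤ 0) := by
  obtain ⟨δ, hδ, hmin⟩ := hmin
  -- central expansion estimate
  have main : ∀ a : Fin (r + 1) → MvPolynomial (Fin 3) ℝ,
      (∀ i, (a i).IsHomogeneous d) →
      ∃ ε > (0:ℝ), ∀ t : ℝ, |t| < ε →
        pInner (q - p) (q - p) ≤ pInner (q - p) (q - p)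
          - 2*(2*t)*(pInner (q - p) (∑ i, h i * a i))
          - 2*(t^2)*(pInner (q - p) (∑ i, (a i)^2))
          + (2*t)^2 * pInner (∑ i, h i * a i) (∑ i, h i * a i)
          + 2*((2*t)*(t^2))*(pInner (∑ i, h i * a i) (∑ i, (a i)^2))
          + (t^2)^2 * pInner (∑ i, (a i)^2) (∑ i, (a i)^2) := by
    intro a ha
    set M := ∑ i, pInner (a i) (a i) with hMdef
    have hM0 : 0 ≤ M := Finset.sum_nonneg fun i _ => pInner_self_nonneg _
    refine ⟨Real.sqrt (δ/(M+1)), Real.sqrt_pos.mpr (by positivity), fun t ht => ?_⟩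
    have ht2 : t^2 < δ/(M+1) := by
      have h1 : |t| * |t| < Real.sqrt (δ/(M+1)) * Real.sqrt (δ/(M+1)) :=
        mul_self_lt_mul_self (abs_nonneg t) ht
      rw [abs_mul_abs_self, Real.mul_self_sqrt (by positivity)] at h1
      calc t^2 = t * t := sq t
      _ < δ/(M+1) := h1
    have ht3 : t^2 * (M+1) < δ := (lt_div_iff₀ (by positivity)).mp ht2
    have hbh : ∀ i, (h i + C t * a i).IsHomogeneous d := fun i =>
      (hhom i).add (by simpa using (isHomogeneous_C (Fin 3) t).mul (ha i))
    have hclose : ∀ i, pInner ((h i + C t * a i) - h i) ((h i + C t * a i) - h i) < δ := by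
      intro i
      have he : (h i + C t * a i) - h i = C t * a i := by ring
      rw [he, pInner_Cmul_left, pInner_Cmul_right]
      have hi : pInner (a i) (a i) ≤ M :=
        Finset.single_le_sum (f := fun j => pInner (a j) (a j))
          (fun j _ => pInner_self_nonneg _) (Finset.mem_univ i)
      nlinarith [pInner_self_nonneg (a i), sq_nonneg t]
    have happ := hmin (fun i => h i + C t * a i) hbh hclose
    have key : q - ∑ i, (h i + C t * a i)^2
        = (q - p) - C (2*t) * (∑ i, h i * a i) - C (t^2) * (∑ i, (a i)^2) := by
      have hsum : ∑ i, (h i + C t * a i)^2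
          = (∑ i, (h i)^2) + C (2*t) * (∑ i, h i * a i) + C (t^2) * (∑ i, (a i)^2) := by
        rw [Finset.mul_sum, Finset.mul_sum, ← Finset.sum_add_distrib, ← Finset.sum_add_distrib]
        refine Finset.sum_congr rfl fun i _ => ?_
        simp only [map_mul, map_pow, map_ofNat]
        ring
      rw [hsum, hp]; ring
    rw [key, pInner_expand] at happ
    exact happ
  constructor
  · -- first-order condition
    intro a ha
    obtain ⟨ε, hε, H⟩ := main a ha
    set L := pInner (q - p) (∑ i, h i * a i) with hL
    set L2 := pInner (q - p) (∑ i, (a i)^2) with hL2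
    set A := pInner (∑ i, h i * a i) (∑ i, h i * a i) with hA
    set B := pInner (∑ i, h i * a i) (∑ i, (a i)^2) with hB
    set Cc := pInner (∑ i, (a i)^2) (∑ i, (a i)^2) with hCc
    set M' := |(-2*L2 + 4*A)| + |4*B| + |Cc| with hM'
    have hM'0 : 0 ≤ M' := by positivity
    have hε' : 0 < min ε 1 := lt_min hε one_pos
    have pos : (4*L) ≤ 0 := by
      apply aux_le_zero hε' hM'0
      intro t ht0 htε
      have ht1 : t < 1 := lt_of_lt_of_le htε (min_le_right _ _)
      have htε2 : |t| < ε := by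
        rw [abs_of_pos ht0]; exact lt_of_lt_of_le htε (min_le_left _ _)
      have H' := H t htε2
      have e1 : t^3 ≤ t^2 := by nlinarith
      have e2 : t^4 ≤ t^2 := by nlinarith
      have c1 : t^2*(-2*L2 + 4*A) ≤ t^2*|(-2*L2 + 4*A)| :=
        mul_le_mul_of_nonneg_left (le_abs_self _) (sq_nonneg t)
      have c2 : t^3*(4*B) ≤ t^2*|4*B| :=
        calc t^3*(4*B) ≤ t^3*|4*B| :=
              mul_le_mul_of_nonneg_left (le_abs_self _) (by positivity)
        _ ≤ t^2*|4*B| := mul_le_mul_of_nonneg_right e1 (abs_nonneg _)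
      have c3 : t^4*Cc ≤ t^2*|Cc| :=
        calc t^4*Cc ≤ t^4*|Cc| :=
              mul_le_mul_of_nonneg_left (le_abs_self _) (by positivity)
        _ ≤ t^2*|Cc| := mul_le_mul_of_nonneg_right e2 (abs_nonneg _)
      have hsplit : M'*t^2 = t^2*|(-2*L2 + 4*A)| + t^2*|4*B| + t^2*|Cc| := by
        rw [hM']; ring
      have H'' : (4*L)*t ≤ t^2*(-2*L2 + 4*A) + t^3*(4*B) + t^4*Cc := by nlinarith [H']
      rw [hsplit]; linarith [H'', c1, c2, c3]
    have neg : (-(4*L)) ≤ 0 := by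
      apply aux_le_zero hε' hM'0
      intro t ht0 htε
      have ht1 : t < 1 := lt_of_lt_of_le htε (min_le_right _ _)
      have htε2 : |(-t)| < ε := by
        rw [abs_neg, abs_of_pos ht0]; exact lt_of_lt_of_le htε (min_le_left _ _)
      have H' := H (-t) htε2
      have e1 : t^3 ≤ t^2 := by nlinarith
      have e2 : t^4 ≤ t^2 := by nlinarith
      have c1 : t^2*(-2*L2 + 4*A) ≤ t^2*|(-2*L2 + 4*A)| :=
        mul_le_mul_of_nonneg_left (le_abs_self _) (sq_nonneg t)
      have c2 : t^3*(-(4*B)) ≤ t^2*|4*B| := by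
        calc t^3*(-(4*B)) ≤ t^3*|4*B| := by
              apply mul_le_mul_of_nonneg_left _ (by positivity : (0:ℝ) ≤ t^3)
              rw [← abs_neg]; exact le_abs_self _
        _ ≤ t^2*|4*B| := mul_le_mul_of_nonneg_right e1 (abs_nonneg _)
      have c3 : t^4*Cc ≤ t^2*|Cc| :=
        calc t^4*Cc ≤ t^4*|Cc| :=
              mul_le_mul_of_nonneg_left (le_abs_self _) (by positivity)
        _ ≤ t^2*|Cc| := mul_le_mul_of_nonneg_right e2 (abs_nonneg _)
      have hsplit : M'*t^2 = t^2*|(-2*L2 + 4*A)| + t^2*|4*B| + t^2*|Cc| := by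
        rw [hM']; ring
      have H'' : (-(4*L))*t ≤ t^2*(-2*L2 + 4*A) + t^3*(-(4*B)) + t^4*Cc := by nlinarith [H']
      rw [hsplit]; linarith [H'', c1, c2, c3]
    linarith
  · -- second-order condition
    intro a ha hS0
    obtain ⟨ε, hε, H⟩ := main a ha
    have hS : (∑ i, h i * a i) = 0 := by
      rw [← hS0]; exact Finset.sum_congr rfl fun i _ => mul_comm _ _
    rw [hS] at H
    have hz1 : pInner (q - p) (0 : MvPolynomial (Fin 3) ℝ) = 0 := by
      simp [pInner]
    have hz2 : pInner (0 : MvPolynomial (Fin 3) ℝ) (0 : MvPolynomial (Fin 3) ℝ) = 0 := by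
      simp [pInner]
    have hz3 : pInner (0 : MvPolynomial (Fin 3) ℝ) (∑ i, (a i)^2) = 0 := by
      simp [pInner]
    rw [hz1, hz2, hz3] at H
    set L2 := pInner (q - p) (∑ i, (a i)^2) with hL2
    set Cc := pInner (∑ i, (a i)^2) (∑ i, (a i)^2) with hCc
    have hε' : 0 < min ε 1 := lt_min hε one_pos
    have key : (2*L2) ≤ 0 := by
      apply aux_le_zero hε' (abs_nonneg Cc)
      intro t ht0 htε
      have ht1 : t < 1 := lt_of_lt_of_le htε (min_le_right _ _)
      have htε2 : |t| < ε := by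
        rw [abs_of_pos ht0]; exact lt_of_lt_of_le htε (min_le_left _ _)
      have H' := H t htε2
      have e2 : t^4 ≤ t^3 := by nlinarith
      have c3 : t^4*Cc ≤ t^3*|Cc| :=
        calc t^4*Cc ≤ t^4*|Cc| :=
              mul_le_mul_of_nonneg_left (le_abs_self _) (by positivity)
        _ ≤ t^3*|Cc| := mul_le_mul_of_nonneg_right e2 (abs_nonneg _)
      have H'' : (2*L2)*t^2 ≤ t^4*Cc := by nlinarith [H']
      have step : ((2*L2)*t)*t ≤ (|Cc| * t^2)*t := by nlinarith [H'', c3]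
      exact le_of_mul_le_mul_right step ht0
    linarith
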